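/- (Partial q-difference equation in x for 2D q-Genocchi polynomials.) For every n ≥ 1: q^{n−1} G_{n,q}(x,y) + Σ_{k=1}^{n} (q^{n−k}/[k]_q!) (α_k^G + [k]_q β_{k−1}^G y) D_{q,x}^{k} G_{n,q}(x,y) + q^{n} x · D_{q,x} G_{n,q}(x,y) − [n]_q · G_{n,q}(qx,y) = 0, where G_{n,q}(qx,y) denotes the polynomial obtained from G_{n,q}(x,y) by substituting qx for x. -/

import Mathlib

noncomputable section

open Finset MvPolynomial

/-- The `q`-integer `[n]_q = 1 + q + ⋯ + q^(n-1)`. -/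
def qInt {K : Type*} [Field K] (q : K) (n : ℕ) : K := ∑ i ∈ Finset.range n, q ^ i

/-- The `q`-factorial `[n]_q! = [1]_q [2]_q ⋯ [n]_q`. -/
def qFact {K : Type*} [Field K] (q : K) (n : ℕ) : K := ∏ k ∈ Finset.range n, qInt q (k + 1)

/-- The `q`-binomial coefficient `[n choose k]_q`. -/
def qChoose {K : Type*} [Field K] (q : K) (n k : ℕ) : K :=
  qFact q n / (qFact q k * qFact q (n - k))

/-- The partial `q`-derivative in the variable `v` (v = 0 is `x`, v = 1 is `y`),
the linear operator determined by `D_{q,x}(x^m y^l) = [m]_q x^(m-1) y^l` and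
`D_{q,y}(x^m y^l) = [l]_q x^m y^(l-1)`. -/
def qDeriv {K : Type*} [Field K] (q : K) (v : Fin 2) (P : MvPolynomial (Fin 2) K) :
    MvPolynomial (Fin 2) K :=
  ∑ m ∈ P.support, monomial (m - Finsupp.single v 1) (P.coeff m * qInt q (m v))

/-- Substitution `x ↦ c·x` in a polynomial in the two variables `x = X 0`, `y = X 1`. -/
def substX {K : Type*} [Field K] (c : K) (P : MvPolynomial (Fin 2) K) :
    MvPolynomial (Fin 2) K :=
  aeval (fun i : Fin 2 => if i = 0 then C c * X 0 else X 1) P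

/-- Substitution `y ↦ c·y` in a polynomial in the two variables `x = X 0`, `y = X 1`. -/
def substY {K : Type*} [Field K] (c : K) (P : MvPolynomial (Fin 2) K) :
    MvPolynomial (Fin 2) K :=
  aeval (fun i : Fin 2 => if i = 0 then X 0 else C c * X 1) P

/-- The 2D `q`-Appell polynomials attached to a coefficient sequence `a`:
`A_{n,q}(x,y) = Σ_{i+j+k=n} ([n]_q!/([i]_q![j]_q![k]_q!)) a_i q^(k(k-1)/2) x^j y^k`. -/
def appell {K : Type*} [Field K] (q : K) (a : ℕ → K) (n : ℕ) : MvPolynomial (Fin 2) K :=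
  ∑ i ∈ Finset.range (n + 1), ∑ j ∈ Finset.range (n + 1 - i),
    monomial (Finsupp.single (0 : Fin 2) j + Finsupp.single (1 : Fin 2) (n - i - j))
      (qFact q n / (qFact q i * qFact q j * qFact q (n - i - j)) * a i *
        q ^ ((n - i - j) * (n - i - j - 1) / 2))

section Scalar
variable {K : Type*} [Field K] (q : K)

@[simp] lemma qInt_zero : qInt q 0 = 0 := by simp [qInt]
@[simp] lemma qInt_one : qInt q 1 = 1 := by simp [qInt]

lemma qInt_succ (n : ℕ) : qInt q (n+1) = qInt q n + q ^ n := by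
  simp [qInt, Finset.sum_range_succ]

lemma qInt_add (a b : ℕ) : qInt q (a+b) = qInt q a + q ^ a * qInt q b := by
  induction b with
  | zero => simp
  | succ b ih => rw [← Nat.add_assoc, qInt_succ, ih, qInt_succ, pow_add]; ring

lemma qInt_mul_sub_one (a : ℕ) : (q - 1) * qInt q a = q ^ a - 1 := by
  rw [mul_comm, qInt]; exact geom_sum_mul q a

lemma pow_eq_qInt (a : ℕ) : q ^ a = 1 + (q - 1) * qInt q a := by
  rw [qInt_mul_sub_one]; ring

@[simp] lemma qFact_zero : qFact q 0 = 1 := by simp [qFact]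
@[simp] lemma qFact_one : qFact q 1 = 1 := by simp [qFact]

lemma qFact_succ (n : ℕ) : qFact q (n+1) = qFact q n * qInt q (n+1) := by
  simp [qFact, Finset.prod_range_succ]

variable (hq : ∀ n : ℕ, 1 ≤ n → qInt q n ≠ 0)
include hq

lemma qFact_ne_zero (n : ℕ) : qFact q n ≠ 0 := by
  induction n with
  | zero => simp
  | succ n ih => rw [qFact_succ]; exact mul_ne_zero ih (hq _ (by omega))

@[simp] lemma qChoose_zero (n : ℕ) : qChoose q n 0 = 1 := by
  simp [qChoose, div_self (qFact_ne_zero q hq n)]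

@[simp] lemma qChoose_self (n : ℕ) : qChoose q n n = 1 := by
  simp [qChoose, div_self (qFact_ne_zero q hq n)]

omit hq in
lemma qChoose_symm {n k : ℕ} (h : k ≤ n) : qChoose q n k = qChoose q n (n-k) := by
  rw [qChoose, qChoose, Nat.sub_sub_self h, mul_comm]

omit hq in
lemma qFact_sub_one {n : ℕ} (h : 1 ≤ n) : qFact q n = qFact q (n-1) * qInt q n := by
  obtain ⟨m, rfl⟩ := Nat.exists_eq_add_of_le h
  simp [Nat.add_comm 1 m, qFact_succ]

lemma qChoose_one {n : ℕ} (h : 1 ≤ n) : qChoose q n 1 = qInt q n := by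
  rw [qChoose, qFact_sub_one q h, qFact_one, one_mul,
    mul_comm, mul_div_assoc, div_self (qFact_ne_zero q hq _), mul_one]

lemma qChoose_sub_one {n : ℕ} (h : 1 ≤ n) : qChoose q n (n-1) = qInt q n := by
  rw [← qChoose_symm q (by omega), qChoose_one q hq h]

lemma qChoose_tri {n k j : ℕ} (h : k + j ≤ n) :
    qChoose q n k * qChoose q (n-k) j = qChoose q n j * qChoose q (n-j) k := by
  rw [qChoose, qChoose, qChoose, qChoose]
  rw [show n - k - j = n - (k+j) by omega, show n - j - k = n - (k+j) by omega]
  field_simp [qFact_ne_zero q hq]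

lemma qChoose_absorb {n k : ℕ} (h1 : 1 ≤ n) (h2 : k ≤ n - 1) :
    qChoose q n k * qInt q (n-k) = qInt q n * qChoose q (n-1) k := by
  have hnk : (1:ℕ) ≤ n - k := by omega
  rw [qChoose, qChoose, qFact_sub_one q h1, show n - 1 - k = n - k - 1 by omega,
    qFact_sub_one q hnk]
  field_simp [qFact_ne_zero q hq, hq _ hnk]

end Scalar

-- continuation fragment, will be concatenated after a.lean content
section Swap
variable {M : Type*} [AddCommMonoid M]

lemma sum_tri_swap (N : ℕ) (f : ℕ → ℕ → M) :
    ∑ k ∈ Finset.range N, ∑ j ∈ Finset.range (N - k), f k j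
      = ∑ j ∈ Finset.range N, ∑ k ∈ Finset.range (N - j), f k j := by
  have h : ∀ g : ℕ → ℕ → M, ∀ k, ∑ j ∈ Finset.range (N - k), g k j
      = ∑ j ∈ Finset.range N, if k + j < N then g k j else 0 := by
    intro g k
    rw [← Finset.sum_filter]
    apply Finset.sum_congr _ (fun _ _ => rfl)
    ext j
    simp only [Finset.mem_range, Finset.mem_filter]
    omega
  calc ∑ k ∈ Finset.range N, ∑ j ∈ Finset.range (N - k), f k j
      = ∑ k ∈ Finset.range N, ∑ j ∈ Finset.range N, if k + j < N then f k j else 0 :=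
        Finset.sum_congr rfl fun k _ => h f k
    _ = ∑ j ∈ Finset.range N, ∑ k ∈ Finset.range N, if k + j < N then f k j else 0 :=
        Finset.sum_comm
    _ = ∑ j ∈ Finset.range N, ∑ k ∈ Finset.range (N - j), f k j := by
        refine Finset.sum_congr rfl fun j _ => ?_
        rw [h (fun j k => f k j) j]
        refine Finset.sum_congr rfl fun k _ => ?_
        rw [Nat.add_comm j k]

end Swap

def cGen {K : Type*} [Field K] (q : K) (G : ℕ → K) (m : ℕ) : K :=
  ∑ j ∈ Finset.range (m+1), qChoose q m j * G j

def SGen {K : Type*} [Field K] (q : K) (G : ℕ → K) (i : ℕ) : K :=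
  ∑ k ∈ Finset.range (i+1), qChoose q i k * q^(i-k) * G k * G (i-k)

section Genocchi
variable {K : Type*} [Field K] (q : K) (hq0 : q ≠ 0) (hq1 : q ≠ 1)
  (hq : ∀ n : ℕ, 1 ≤ n → qInt q n ≠ 0)
  (G : ℕ → K) (hG0 : G 0 = 0) (hG1 : G 1 = 1)
  (hG : ∀ n : ℕ, 2 ≤ n → G n + ∑ k ∈ Finset.range (n + 1), qChoose q n k * G k = 0)

include hq hG0 hG1 hG

lemma cGen_eq (m : ℕ) : cGen q G m = (if m = 1 then 2 else 0) - G m := by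
  match m with
  | 0 => simp [cGen, hG0, qChoose_zero q hq]
  | 1 =>
    simp [cGen, Finset.sum_range_succ, hG0, hG1, qChoose_zero q hq, qChoose_self q hq]
    norm_num
  | (m+2) =>
    have := hG (m+2) (by omega)
    simp only [cGen]
    have hm : (m+2) ≠ 1 := by omega
    rw [if_neg hm]
    linear_combination this

lemma SGen_symm (m : ℕ) :
    SGen q G m = ∑ k ∈ Finset.range (m+1), qChoose q m k * q^k * G k * G (m-k) := by
  rw [SGen, ← Finset.sum_range_reflect]
  refine Finset.sum_congr rfl fun k hk => ?_
  simp only [Finset.mem_range] at hk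
  have hk' : k ≤ m := by omega
  rw [show m + 1 - 1 - k = m - k by omega, show m - (m - k) = k by omega,
    ← qChoose_symm q hk']
  ring

lemma V_lemma (m : ℕ) :
    ∑ k ∈ Finset.range (m+1), qChoose q m k * q^(m-k) * G k
      = cGen q G m + (q-1) * qInt q m * cGen q G (m-1) := by
  match m with
  | 0 => simp [cGen, hG0]
  | (m+1) =>
    have step2 : ∀ k ∈ Finset.range (m+2),
        (q-1) * (qChoose q (m+1) k * qInt q (m+1-k) * G k)
          = (q-1) * qInt q (m+1) * (if k ≤ m then qChoose q m k * G k else 0) := by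
      intro k hk
      simp only [Finset.mem_range] at hk
      by_cases h : k ≤ m
      · rw [if_pos h, mul_assoc, ← mul_assoc (qChoose q (m+1) k),
          qChoose_absorb q hq (by omega) (by omega : k ≤ m + 1 - 1),
          show m + 1 - 1 = m by omega]
        ring
      · have hk1 : k = m + 1 := by omega
        subst hk1
        rw [if_neg h, show m + 1 - (m+1) = 0 by omega, qInt_zero]
        ring
    have h2 : ∑ k ∈ Finset.range (m+2), (q-1) * (qChoose q (m+1) k * qInt q (m+1-k) * G k)
        = (q-1) * qInt q (m+1) * cGen q G m := by
      rw [Finset.sum_congr rfl step2, ← Finset.mul_sum]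
      congr 1
      rw [Finset.sum_range_succ, if_neg (by omega : ¬ (m+1 ≤ m)), add_zero, cGen]
      exact Finset.sum_congr rfl fun k hk =>
        if_pos (by simp only [Finset.mem_range] at hk; omega)
    have step : ∀ k ∈ Finset.range (m+2), qChoose q (m+1) k * q^(m+1-k) * G k
        = qChoose q (m+1) k * G k
          + (q-1) * (qChoose q (m+1) k * qInt q (m+1-k) * G k) := by
      intro k hk
      rw [pow_eq_qInt q (m+1-k)]
      ring
    rw [Finset.sum_congr rfl step, Finset.sum_add_distrib, h2,
      show m + 1 - 1 = m by omega]
    rfl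

lemma qChoose_succ_self (m : ℕ) : qChoose q (m+1) m = qInt q (m+1) := by
  have := qChoose_sub_one q hq (n := m+1) (by omega)
  rwa [show m+1-1 = m by omega] at this

include hq1 in
lemma SGen_eq (i : ℕ) (hi : 1 ≤ i) :
    SGen q G i = 2*q*qInt q (i-1)*G i + 2*q^(i-1)*qInt q i*G (i-1) := by
  obtain ⟨m, rfl⟩ : ∃ m, i = m + 1 := ⟨i - 1, by omega⟩
  rw [show m+1-1 = m by omega]
  -- T evaluated via the recurrence
  have hTsum : ∑ k ∈ Finset.range (m+3),
      qChoose q (m+2) k * G k * q^(m+2-k) * (G (m+2-k) + cGen q G (m+2-k))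
      = 2*q*qInt q (m+2)*G (m+1) := by
    have h1 : ∀ k ∈ Finset.range (m+3),
        qChoose q (m+2) k * G k * q^(m+2-k) * (G (m+2-k) + cGen q G (m+2-k))
        = qChoose q (m+2) k * G k * q^(m+2-k) * (if m+2-k = 1 then (2:K) else 0) := by
      intro k hk
      rw [cGen_eq q hq G hG0 hG1 hG]
      ring
    rw [Finset.sum_congr rfl h1, Finset.sum_eq_single (m+1)]
    · rw [if_pos (by omega), show m+2-(m+1) = 1 by omega, qChoose_succ_self q hq G hG0 hG1 hG]
      ring
    · intro b hb hbne
      simp only [Finset.mem_range] at hb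
      rw [if_neg (by omega)]
      ring
    · intro h
      exact absurd (Finset.mem_range.mpr (by omega)) h
  -- split T = SGen + U
  have hsplit : ∑ k ∈ Finset.range (m+3),
      qChoose q (m+2) k * G k * q^(m+2-k) * (G (m+2-k) + cGen q G (m+2-k))
      = SGen q G (m+2)
        + ∑ k ∈ Finset.range (m+3), qChoose q (m+2) k * G k * q^(m+2-k) * cGen q G (m+2-k) := by
    rw [SGen, ← Finset.sum_add_distrib]
    refine Finset.sum_congr rfl fun k hk => ?_
    ring
  -- evaluate U
  have hU : ∑ k ∈ Finset.range (m+3), qChoose q (m+2) k * G k * q^(m+2-k) * cGen q G (m+2-k)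
      = 2*q^(m+1)*qInt q (m+2)*G (m+1) - SGen q G (m+2)
        + 2*(q-1)*q^m*qInt q (m+2)*qInt q (m+1)*G m
        - (q-1)*qInt q (m+2)*SGen q G (m+1) := by
    calc ∑ k ∈ Finset.range (m+3), qChoose q (m+2) k * G k * q^(m+2-k) * cGen q G (m+2-k)
        = ∑ k ∈ Finset.range (m+3), ∑ j ∈ Finset.range (m+3-k),
            qChoose q (m+2) k * G k * q^(m+2-k) * (qChoose q (m+2-k) j * G j) := by
          refine Finset.sum_congr rfl fun k hk => ?_
          simp only [Finset.mem_range] at hk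
          rw [cGen, Finset.mul_sum, show m+2-k+1 = m+3-k by omega]
      _ = ∑ j ∈ Finset.range (m+3), ∑ k ∈ Finset.range (m+3-j),
            qChoose q (m+2) k * G k * q^(m+2-k) * (qChoose q (m+2-k) j * G j) :=
          sum_tri_swap (m+3) _
      _ = ∑ j ∈ Finset.range (m+3), qChoose q (m+2) j * G j * q^j *
            (∑ k ∈ Finset.range (m+2-j+1), qChoose q (m+2-j) k * q^(m+2-j-k) * G k) := by
          refine Finset.sum_congr rfl fun j hj => ?_
          simp only [Finset.mem_range] at hj
          rw [Finset.mul_sum, show m+2-j+1 = m+3-j by omega]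
          refine Finset.sum_congr rfl fun k hk => ?_
          simp only [Finset.mem_range] at hk
          have e1 : qChoose q (m+2) k * qChoose q (m+2-k) j
              = qChoose q (m+2) j * qChoose q (m+2-j) k := qChoose_tri q hq (by omega)
          have e2 : (q:K)^(m+2-k) = q^j * q^(m+2-j-k) := by
            rw [← pow_add]
            congr 1
            omega
          rw [e2]
          linear_combination (q^j * q^(m+2-j-k) * G k * G j) * e1
      _ = ∑ j ∈ Finset.range (m+3), qChoose q (m+2) j * G j * q^j *
            (cGen q G (m+2-j) + (q-1) * qInt q (m+2-j) * cGen q G (m+2-j-1)) := by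
          refine Finset.sum_congr rfl fun j hj => ?_
          rw [V_lemma q hq G hG0 hG1 hG]
      _ = ∑ j ∈ Finset.range (m+3),
            (qChoose q (m+2) j * G j * q^j * (if m+2-j = 1 then (2:K) else 0)
             - qChoose q (m+2) j * q^j * G j * G (m+2-j)
             + (q-1) * (qChoose q (m+2) j * qInt q (m+2-j) * q^j * G j *
                 (if m+2-j-1 = 1 then (2:K) else 0))
             - (q-1) * (qChoose q (m+2) j * qInt q (m+2-j) * q^j * G j * G (m+2-j-1))) := by
          refine Finset.sum_congr rfl fun j hj => ?_
          rw [cGen_eq q hq G hG0 hG1 hG, cGen_eq q hq G hG0 hG1 hG]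
          ring
      _ = 2*q^(m+1)*qInt q (m+2)*G (m+1) - SGen q G (m+2)
            + 2*(q-1)*q^m*qInt q (m+2)*qInt q (m+1)*G m
            - (q-1)*qInt q (m+2)*SGen q G (m+1) := by
          rw [Finset.sum_sub_distrib, Finset.sum_add_distrib, Finset.sum_sub_distrib]
          have hB1 : ∑ j ∈ Finset.range (m+3),
              qChoose q (m+2) j * G j * q^j * (if m+2-j = 1 then (2:K) else 0)
              = 2*q^(m+1)*qInt q (m+2)*G (m+1) := by
            rw [Finset.sum_eq_single (m+1)]
            · rw [if_pos (by omega), qChoose_succ_self q hq G hG0 hG1 hG]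
              ring
            · intro b hb hbne
              simp only [Finset.mem_range] at hb
              rw [if_neg (by omega)]
              ring
            · intro h
              exact absurd (Finset.mem_range.mpr (by omega)) h
          have hB2 : ∑ j ∈ Finset.range (m+3),
              qChoose q (m+2) j * q^j * G j * G (m+2-j) = SGen q G (m+2) := by
            rw [SGen_symm q hq G hG0 hG1 hG]
          have hB3 : ∑ j ∈ Finset.range (m+3),
              (q-1) * (qChoose q (m+2) j * qInt q (m+2-j) * q^j * G j *
                (if m+2-j-1 = 1 then (2:K) else 0))
              = 2*(q-1)*q^m*qInt q (m+2)*qInt q (m+1)*G m := by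
            rw [Finset.sum_eq_single m]
            · rw [if_pos (by omega)]
              have eab : qChoose q (m+2) m * qInt q (m+2-m) = qInt q (m+2) * qInt q (m+1) := by
                rw [qChoose_absorb q hq (by omega) (by omega : m ≤ m+2-1),
                  show m+2-1 = m+1 by omega, qChoose_succ_self q hq G hG0 hG1 hG]
              linear_combination ((q-1) * q^m * G m * 2) * eab
            · intro b hb hbne
              simp only [Finset.mem_range] at hb
              rw [if_neg (by omega)]
              ring
            · intro h
              exact absurd (Finset.mem_range.mpr (by omega)) h
          have hB4 : ∑ j ∈ Finset.range (m+3),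
              (q-1) * (qChoose q (m+2) j * qInt q (m+2-j) * q^j * G j * G (m+2-j-1))
              = (q-1)*qInt q (m+2)*SGen q G (m+1) := by
            have h4 : ∀ j ∈ Finset.range (m+3),
                (q-1) * (qChoose q (m+2) j * qInt q (m+2-j) * q^j * G j * G (m+2-j-1))
                = (q-1) * qInt q (m+2) *
                    (if j ≤ m+1 then qChoose q (m+1) j * q^j * G j * G (m+1-j) else 0) := by
              intro j hj
              simp only [Finset.mem_range] at hj
              by_cases h : j ≤ m+1
              · rw [if_pos h, show m+2-j-1 = m+1-j by omega]
                have eab : qChoose q (m+2) j * qInt q (m+2-j) = qInt q (m+2) * qChoose q (m+1) j := by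
                  rw [qChoose_absorb q hq (by omega) (by omega : j ≤ m+2-1),
                    show m+2-1 = m+1 by omega]
                linear_combination ((q-1) * q^j * G j * G (m+1-j)) * eab
              · have hj2 : j = m+2 := by omega
                subst hj2
                rw [if_neg h, show m+2-(m+2) = 0 by omega, qInt_zero]
                ring
            rw [Finset.sum_congr rfl h4, ← Finset.mul_sum]
            congr 1
            rw [Finset.sum_range_succ, if_neg (by omega : ¬ (m+2 ≤ m+1)), add_zero,
              SGen_symm q hq G hG0 hG1 hG]
            exact Finset.sum_congr rfl fun j hj =>
              if_pos (by simp only [Finset.mem_range] at hj; omega)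
          rw [hB1, hB2, hB3, hB4]
  -- combine and solve
  have key : (q-1) * qInt q (m+2) * SGen q G (m+1)
      = 2*q^(m+1)*qInt q (m+2)*G (m+1)
        + 2*(q-1)*q^m*qInt q (m+2)*qInt q (m+1)*G m
        - 2*q*qInt q (m+2)*G (m+1) := by
    linear_combination hsplit - hTsum + hU
  have hne : (q-1) * qInt q (m+2) ≠ 0 :=
    mul_ne_zero (sub_ne_zero.mpr hq1) (hq _ (by omega))
  apply mul_left_cancel₀ hne
  have hsub : (q-1) * qInt q m = q^m - 1 := qInt_mul_sub_one q m
  linear_combination key - (2*q*qInt q (m+2)*G (m+1)) * hsub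


include hq1 in
lemma Q_eq (i : ℕ) (hi : 1 ≤ i) :
    ∑ k ∈ Finset.range (i+1), q^(i-k) * cGen q G k * qChoose q i k * G (i-k)
      = -(2*q*qInt q (i-1)*G i) := by
  have h1 : ∀ k ∈ Finset.range (i+1), q^(i-k) * cGen q G k * qChoose q i k * G (i-k)
      = q^(i-k) * (if k = 1 then (2:K) else 0) * qChoose q i k * G (i-k)
        - qChoose q i k * q^(i-k) * G k * G (i-k) := by
    intro k hk
    rw [cGen_eq q hq G hG0 hG1 hG]
    ring
  rw [Finset.sum_congr rfl h1, Finset.sum_sub_distrib]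
  have h2 : ∑ k ∈ Finset.range (i+1),
      q^(i-k) * (if k = 1 then (2:K) else 0) * qChoose q i k * G (i-k)
      = 2*q^(i-1)*qInt q i*G (i-1) := by
    rw [Finset.sum_eq_single 1]
    · rw [if_pos rfl, qChoose_one q hq hi]
      ring
    · intro b hb hbne
      rw [if_neg hbne]
      ring
    · intro h
      exact absurd (Finset.mem_range.mpr (by omega)) h
  have h3 : ∑ k ∈ Finset.range (i+1), qChoose q i k * q^(i-k) * G k * G (i-k)
      = SGen q G i := rfl
  rw [h2, h3, SGen_eq q hq1 hq G hG0 hG1 hG i hi]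
  ring

section Char
variable [CharZero K]

include hq0 hq1 in
lemma MA_lemma (αG : ℕ → K)
    (hαG : ∀ k : ℕ, 1 ≤ k →
      αG k = -(1 / (2 * q)) * ∑ j ∈ Finset.range (k + 1), qChoose q k j * G j) (i : ℕ) :
    ∑ k ∈ Finset.Icc 1 i, q^(i-k) * αG k * qChoose q i k * G (i-k)
      = (qInt q i - q^(i-1)) * G i := by
  match i with
  | 0 => simp [hG0]
  | (i+1) =>
  have hi : 1 ≤ i + 1 := by omega
  have hrange : Finset.range (i+2) = insert 0 (Finset.Icc 1 (i+1)) := by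
    ext x
    simp only [Finset.mem_range, Finset.mem_insert, Finset.mem_Icc]
    omega
  have hQ := Q_eq q hq1 hq G hG0 hG1 hG (i+1) hi
  rw [hrange, Finset.sum_insert (by simp)] at hQ
  rw [cGen_eq q hq G hG0 hG1 hG 0, if_neg (by omega), hG0] at hQ
  have h0 : q^(i+1-0) * ((0:K) - 0) * qChoose q (i+1) 0 * G (i+1-0) = 0 := by ring
  rw [h0, zero_add] at hQ
  have hstep : ∀ k ∈ Finset.Icc 1 (i+1),
      q^(i+1-k) * αG k * qChoose q (i+1) k * G (i+1-k)
      = -(1 / (2 * q)) * (q^(i+1-k) * cGen q G k * qChoose q (i+1) k * G (i+1-k)) := by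
    intro k hk
    simp only [Finset.mem_Icc] at hk
    have : αG k = -(1 / (2 * q)) * cGen q G k := hαG k hk.1
    rw [this]
    ring
  rw [Finset.sum_congr rfl hstep, ← Finset.mul_sum, hQ]
  have e1 : qInt q (i+1) = qInt q i + q^i := qInt_succ q i
  rw [show i+1-1 = i by omega, e1]
  field_simp
  ring

include hq0 hq1 in
lemma MB_lemma (βG : ℕ → K) (hβG0 : βG 0 = 1 / q)
    (hβG : ∀ m : ℕ, 1 ≤ m →
      βG m = ((q - 1) / (2 * q)) * ∑ j ∈ Finset.range (m + 1), qChoose q m j * G j) (i : ℕ) :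
    ∑ m ∈ Finset.range (i+1), q^(i-m) * βG m * qChoose q i m * G (i-m) = G i := by
  match i with
  | 0 => simp [hG0]
  | (i+1) =>
  have hi : 1 ≤ i + 1 := by omega
  have hrange : Finset.range (i+2) = insert 0 (Finset.Icc 1 (i+1)) := by
    ext x
    simp only [Finset.mem_range, Finset.mem_insert, Finset.mem_Icc]
    omega
  have hQ := Q_eq q hq1 hq G hG0 hG1 hG (i+1) hi
  rw [hrange, Finset.sum_insert (by simp)] at hQ
  rw [cGen_eq q hq G hG0 hG1 hG 0, if_neg (by omega), hG0] at hQ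
  have h0 : q^(i+1-0) * ((0:K) - 0) * qChoose q (i+1) 0 * G (i+1-0) = 0 := by ring
  rw [h0, zero_add] at hQ
  rw [hrange, Finset.sum_insert (by simp)]
  have hstep : ∀ m ∈ Finset.Icc 1 (i+1),
      q^(i+1-m) * βG m * qChoose q (i+1) m * G (i+1-m)
      = ((q - 1) / (2 * q)) * (q^(i+1-m) * cGen q G m * qChoose q (i+1) m * G (i+1-m)) := by
    intro m hm
    simp only [Finset.mem_Icc] at hm
    have : βG m = ((q - 1) / (2 * q)) * cGen q G m := hβG m hm.1
    rw [this]
    ring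
  rw [Finset.sum_congr rfl hstep, ← Finset.mul_sum, hQ, hβG0,
    qChoose_zero q hq, show i+1-0 = i+1 by omega]
  have e2 : (q-1) * qInt q (i+1-1) = q^(i+1-1) - 1 := qInt_mul_sub_one q _
  rw [show i+1-1 = i by omega] at e2
  have e3 : (q:K)^(i+1) = q^i * q := by rw [pow_succ]
  field_simp
  rw [show i + 1 - 1 = i by omega]
  linear_combination (-(q*G (i+1))) * e2

include hq0 hq1 in
lemma MB_Icc (βG : ℕ → K) (hβG0 : βG 0 = 1 / q)
    (hβG : ∀ m : ℕ, 1 ≤ m →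
      βG m = ((q - 1) / (2 * q)) * ∑ j ∈ Finset.range (m + 1), qChoose q m j * G j) (i : ℕ) :
    ∑ k ∈ Finset.Icc 1 (i+1), q^(i+1-k) * βG (k-1) * qChoose q i (k-1) * G (i+1-k) = G i := by
  rw [← MB_lemma q hq0 hq1 hq G hG0 hG1 hG βG hβG0 hβG i]
  refine Finset.sum_bij' (fun k _ => k - 1) (fun m _ => m + 1) ?_ ?_ ?_ ?_ ?_
  · intro a ha
    simp only [Finset.mem_Icc] at ha
    simp only [Finset.mem_range]
    omega
  · intro a ha
    simp only [Finset.mem_range] at ha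
    simp only [Finset.mem_Icc]
    omega
  · intro a ha
    simp only [Finset.mem_Icc] at ha
    show a - 1 + 1 = a
    omega
  · intro a ha
    show a + 1 - 1 = a
    omega
  · intro a ha
    simp only [Finset.mem_Icc] at ha
    show _ = q^(i-(a-1)) * βG (a-1) * qChoose q i (a-1) * G (i-(a-1))
    rw [show i - (a-1) = i+1-a by omega]
end Char

end Genocchi


section Poly
variable {K : Type*} [Field K] (q : K)

lemma qFact_mul_prod (j k : ℕ) :
    qFact q (j+k) = qFact q j * ∏ t ∈ Finset.range k, qInt q (j+t+1) := by
  induction k with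
  | zero => simp
  | succ k ih =>
    rw [show j+(k+1) = (j+k)+1 by omega, qFact_succ, ih, Finset.prod_range_succ]
    rw [show j+k+1 = j+(k+1) by omega]
    ring

lemma coeff_qDeriv (v : Fin 2) (P : MvPolynomial (Fin 2) K) (d : Fin 2 →₀ ℕ) :
    coeff d (qDeriv q v P) = coeff (d + Finsupp.single v 1) P * qInt q (d v + 1) := by
  rw [qDeriv, MvPolynomial.coeff_sum]
  have h1 : ∀ m ∈ P.support, coeff d (monomial (m - Finsupp.single v 1) (P.coeff m * qInt q (m v)))
      = if m - Finsupp.single v 1 = d then P.coeff m * qInt q (m v) else 0 := by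
    intro m _
    rw [coeff_monomial]
  rw [Finset.sum_congr rfl h1, Finset.sum_eq_single (d + Finsupp.single v 1)]
  · rw [if_pos (add_tsub_cancel_right _ _)]
    congr 1
    simp
  · intro m hm hne
    by_cases he : m - Finsupp.single v 1 = d
    · rw [if_pos he]
      have hv : m v = 0 := by
        by_contra hv
        apply hne
        have hle : Finsupp.single v 1 ≤ m := by
          rw [Finsupp.single_le_iff]
          omega
        rw [← he, tsub_add_cancel_of_le hle]
      rw [hv, qInt_zero, mul_zero]
    · rw [if_neg he]
  · intro h
    rw [MvPolynomial.notMem_support_iff] at h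
    rw [if_pos (add_tsub_cancel_right _ _), h, zero_mul]

lemma coeff_qDeriv_iterate (k : ℕ) (P : MvPolynomial (Fin 2) K) (d : Fin 2 →₀ ℕ) :
    coeff d ((qDeriv q 0)^[k] P)
      = coeff (d + Finsupp.single 0 k) P * ∏ t ∈ Finset.range k, qInt q (d 0 + t + 1) := by
  induction k generalizing P with
  | zero => simp
  | succ k ih =>
    rw [Function.iterate_succ_apply, ih (qDeriv q 0 P), coeff_qDeriv,
      Finset.prod_range_succ]
    have e1 : d + Finsupp.single (0 : Fin 2) k + Finsupp.single (0 : Fin 2) 1 = d + Finsupp.single (0 : Fin 2) (k+1) := by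
      rw [add_assoc, ← Finsupp.single_add]
    have e2 : (d + Finsupp.single (0 : Fin 2) k) 0 = d 0 + k := by simp
    rw [e1, e2]
    ring

lemma substX_monomial (c : K) (e : Fin 2 →₀ ℕ) (a : K) :
    aeval (fun i : Fin 2 => if i = 0 then C c * X 0 else X 1) (monomial e a)
      = monomial e (c ^ (e 0) * a) := by
  rw [aeval_monomial, Finsupp.prod_fintype _ _ (fun i => pow_zero _), Fin.prod_univ_two]
  rw [if_pos rfl, if_neg (by decide : (1 : Fin 2) ≠ 0)]
  rw [MvPolynomial.monomial_eq, Finsupp.prod_fintype _ _ (fun i => pow_zero _),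
    Fin.prod_univ_two]
  rw [MvPolynomial.algebraMap_eq, mul_pow, map_mul, map_pow]
  ring

lemma coeff_substX (c : K) (P : MvPolynomial (Fin 2) K) (d : Fin 2 →₀ ℕ) :
    coeff d (substX c P) = c ^ (d 0) * coeff d P := by
  conv_lhs => rw [substX, P.as_sum, map_sum]
  rw [Finset.sum_congr rfl (fun m _ => substX_monomial c m (coeff m P)),
    MvPolynomial.coeff_sum]
  have h1 : ∀ m ∈ P.support, coeff d (monomial m (c ^ (m 0) * coeff m P))
      = if m = d then c ^ (m 0) * coeff m P else 0 := by
    intro m _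
    rw [coeff_monomial]
  rw [Finset.sum_congr rfl h1, Finset.sum_eq_single d]
  · rw [if_pos rfl]
  · intro m hm hne
    rw [if_neg hne]
  · intro h
    rw [MvPolynomial.notMem_support_iff] at h
    rw [if_pos rfl, h, mul_zero]

lemma coeff_appell (a : ℕ → K) (n : ℕ) (d : Fin 2 →₀ ℕ) :
    coeff d (appell q a n) = if d 0 + d 1 ≤ n then
      qFact q n / (qFact q (n - d 0 - d 1) * qFact q (d 0) * qFact q (d 1)) * a (n - d 0 - d 1) *
        q ^ (d 1 * (d 1 - 1) / 2) else 0 := by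
  have hsingle : ∀ j k : ℕ,
      (Finsupp.single (0 : Fin 2) j + Finsupp.single (1 : Fin 2) k = d) ↔ (j = d 0 ∧ k = d 1) := by
    intro j k
    constructor
    · intro h
      constructor
      · rw [← h]
        simp [Finsupp.single_apply]
      · rw [← h]
        simp [Finsupp.single_apply]
    · rintro ⟨h1, h2⟩
      ext v
      fin_cases v <;> simp [Finsupp.single_apply, h1, h2]
  rw [appell, MvPolynomial.coeff_sum]
  have h1 : ∀ i ∈ Finset.range (n+1),
      coeff d (∑ j ∈ Finset.range (n + 1 - i),
        monomial (Finsupp.single (0 : Fin 2) j + Finsupp.single (1 : Fin 2) (n - i - j))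
          (qFact q n / (qFact q i * qFact q j * qFact q (n - i - j)) * a i *
            q ^ ((n - i - j) * (n - i - j - 1) / 2)))
      = ∑ j ∈ Finset.range (n + 1 - i),
          if j = d 0 ∧ n - i - j = d 1 then
            qFact q n / (qFact q i * qFact q j * qFact q (n - i - j)) * a i *
              q ^ ((n - i - j) * (n - i - j - 1) / 2) else 0 := by
    intro i _
    rw [MvPolynomial.coeff_sum]
    refine Finset.sum_congr rfl fun j _ => ?_
    rw [coeff_monomial]
    congr 1
    rw [eq_iff_iff]
    exact hsingle j (n - i - j)
  rw [Finset.sum_congr rfl h1]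
  by_cases hd : d 0 + d 1 ≤ n
  · rw [if_pos hd, Finset.sum_eq_single (n - d 0 - d 1)]
    · rw [Finset.sum_eq_single (d 0)]
      · rw [if_pos ⟨rfl, by omega⟩, show n - (n - d 0 - d 1) - d 0 = d 1 by omega]
      · intro j hj hne
        rw [if_neg (by rintro ⟨h1, h2⟩; exact hne h1)]
      · intro h
        exact absurd (Finset.mem_range.mpr (by omega)) h
    · intro i hi hne
      simp only [Finset.mem_range] at hi
      refine Finset.sum_eq_zero fun j hj => ?_
      simp only [Finset.mem_range] at hj
      rw [if_neg (by rintro ⟨h1, h2⟩; apply hne; omega)]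
    · intro h
      exact absurd (Finset.mem_range.mpr (by omega)) h
  · rw [if_neg hd]
    refine Finset.sum_eq_zero fun i hi => Finset.sum_eq_zero fun j hj => ?_
    simp only [Finset.mem_range] at hi hj
    rw [if_neg (by rintro ⟨h1, h2⟩; omega)]

end Poly


lemma tri_step (e : ℕ) : (e+1)*e/2 = e*(e-1)/2 + e := by
  cases e with
  | zero => simp
  | succ f =>
    rw [show (f+1+1)*(f+1) = (f+1)*f + 2*(f+1) by ring,
      Nat.add_mul_div_left _ _ (by norm_num : (0:ℕ) < 2)]
    simp

set_option maxHeartbeats 1000000 in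
/-- Partial `q`-difference equation in `x` for 2D `q`-Genocchi polynomials. -/
theorem qGenocchi2D_qDifference_x
    {K : Type*} [Field K] [CharZero K] (q : K) (hq0 : q ≠ 0) (hq1 : q ≠ 1)
    (hq : ∀ n : ℕ, 1 ≤ n → qInt q n ≠ 0)
    (G : ℕ → K) (hG0 : G 0 = 0) (hG1 : G 1 = 1)
    (hG : ∀ n : ℕ, 2 ≤ n → G n + ∑ k ∈ Finset.range (n + 1), qChoose q n k * G k = 0)
    (αG βG : ℕ → K)
    (hαG : ∀ k : ℕ, 1 ≤ k →
      αG k = -(1 / (2 * q)) * ∑ j ∈ Finset.range (k + 1), qChoose q k j * G j)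
    (hβG0 : βG 0 = 1 / q)
    (hβG : ∀ m : ℕ, 1 ≤ m →
      βG m = ((q - 1) / (2 * q)) * ∑ j ∈ Finset.range (m + 1), qChoose q m j * G j)
    (n : ℕ) (hn : 1 ≤ n) :
    C (q ^ (n - 1)) * appell q G n +
      (∑ k ∈ Finset.Icc 1 n, C (q ^ (n - k) / qFact q k) *
        (C (αG k) + C (qInt q k * βG (k - 1)) * X 1) * (qDeriv q 0)^[k] (appell q G n)) +
      C (q ^ n) * X 0 * qDeriv q 0 (appell q G n) -
      C (qInt q n) * substX q (appell q G n) = 0 := by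
  classical
  rw [MvPolynomial.eq_zero_iff]
  intro d
  have e00 : ∀ k : ℕ, (d + Finsupp.single (0 : Fin 2) k) 0 = d 0 + k := by
    intro k; simp
  have e01 : ∀ k : ℕ, (d + Finsupp.single (0 : Fin 2) k) 1 = d 1 := by
    intro k; simp [Finsupp.single_apply]
  have e10 : ∀ k : ℕ,
      ((d - Finsupp.single (1 : Fin 2) 1 + Finsupp.single (0 : Fin 2) k : Fin 2 →₀ ℕ)) 0 = d 0 + k := by
    intro k; simp [Finsupp.tsub_apply, Finsupp.single_apply]
  have e11 : ∀ k : ℕ,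
      ((d - Finsupp.single (1 : Fin 2) 1 + Finsupp.single (0 : Fin 2) k : Fin 2 →₀ ℕ)) 1 = d 1 - 1 := by
    intro k; simp [Finsupp.tsub_apply, Finsupp.single_apply]
  have ed0 : ((d - Finsupp.single (1 : Fin 2) 1 : Fin 2 →₀ ℕ)) 0 = d 0 := by
    simp [Finsupp.tsub_apply, Finsupp.single_apply]
  rw [coeff_sub, coeff_add, coeff_add, coeff_C_mul]
  have hsum : coeff d (∑ k ∈ Finset.Icc 1 n, C (q ^ (n - k) / qFact q k) *
        (C (αG k) + C (qInt q k * βG (k - 1)) * X 1) * (qDeriv q 0)^[k] (appell q G n))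
      = ∑ k ∈ Finset.Icc 1 n,
          (q ^ (n - k) / qFact q k * αG k *
            (coeff (d + Finsupp.single 0 k) (appell q G n) *
              ∏ t ∈ Finset.range k, qInt q (d 0 + t + 1))
          + q ^ (n - k) / qFact q k * (qInt q k * βG (k - 1)) *
            (if (1 : Fin 2) ∈ d.support then
              coeff (d - Finsupp.single 1 1 + Finsupp.single 0 k) (appell q G n) *
                ∏ t ∈ Finset.range k, qInt q (d 0 + t + 1)
             else 0)) := by
    rw [MvPolynomial.coeff_sum]
    refine Finset.sum_congr rfl fun k hk => ?_
    have hexp : C (q ^ (n - k) / qFact q k) * (C (αG k) + C (qInt q k * βG (k - 1)) * X 1) *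
        (qDeriv q 0)^[k] (appell q G n)
        = C (q ^ (n - k) / qFact q k * αG k) * (qDeriv q 0)^[k] (appell q G n)
          + C (q ^ (n - k) / qFact q k * (qInt q k * βG (k - 1))) *
            (X 1 * (qDeriv q 0)^[k] (appell q G n)) := by
      simp only [map_mul]
      ring
    rw [hexp, coeff_add, coeff_C_mul, coeff_C_mul, coeff_qDeriv_iterate, coeff_X_mul',
      coeff_qDeriv_iterate]
    simp only [ed0]
  rw [hsum, Finset.sum_add_distrib]
  have h3 : coeff d (C (q ^ n) * X 0 * qDeriv q 0 (appell q G n))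
      = q ^ n * qInt q (d 0) * coeff d (appell q G n) := by
    rw [mul_assoc, coeff_C_mul, coeff_X_mul']
    by_cases h : (0 : Fin 2) ∈ d.support
    · rw [if_pos h, coeff_qDeriv]
      have hd0 : 1 ≤ d 0 := by
        rw [Finsupp.mem_support_iff] at h
        omega
      have t1 : d - Finsupp.single (0:Fin 2) 1 + Finsupp.single (0:Fin 2) 1 = d :=
        tsub_add_cancel_of_le (Finsupp.single_le_iff.mpr hd0)
      have t2 : ((d - Finsupp.single (0:Fin 2) 1 : Fin 2 →₀ ℕ)) 0 = d 0 - 1 := by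
        simp [Finsupp.tsub_apply]
      rw [t1, t2, show d 0 - 1 + 1 = d 0 by omega]
      ring
    · rw [if_neg h]
      rw [Finsupp.notMem_support_iff] at h
      rw [h, qInt_zero]
      ring
  rw [h3, coeff_C_mul, coeff_substX]
  by_cases hd : d 0 + d 1 ≤ n
  · obtain ⟨i0, hi0⟩ : ∃ i0, i0 = n - d 0 - d 1 := ⟨_, rfl⟩
    have hAval : coeff d (appell q G n)
        = qFact q n / (qFact q i0 * qFact q (d 0) * qFact q (d 1)) * G i0 *
            q ^ (d 1 * (d 1 - 1) / 2) := by
      rw [coeff_appell, if_pos hd, hi0]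
    have hα : ∑ k ∈ Finset.Icc 1 n, (q ^ (n - k) / qFact q k * αG k *
          (coeff (d + Finsupp.single 0 k) (appell q G n) *
            ∏ t ∈ Finset.range k, qInt q (d 0 + t + 1)))
        = q ^ (d 0 + d 1) *
            (qFact q n / (qFact q i0 * qFact q (d 0) * qFact q (d 1)) *
              q ^ (d 1 * (d 1 - 1) / 2)) *
            ((qInt q i0 - q ^ (i0 - 1)) * G i0) := by
      have hstep : ∀ k ∈ Finset.Icc 1 n, (q ^ (n - k) / qFact q k * αG k *
            (coeff (d + Finsupp.single 0 k) (appell q G n) *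
              ∏ t ∈ Finset.range k, qInt q (d 0 + t + 1)))
          = if k ≤ i0 then q ^ (d 0 + d 1) *
              (qFact q n / (qFact q i0 * qFact q (d 0) * qFact q (d 1)) *
                q ^ (d 1 * (d 1 - 1) / 2)) *
              (q ^ (i0 - k) * αG k * qChoose q i0 k * G (i0 - k)) else 0 := by
        intro k hk
        simp only [Finset.mem_Icc] at hk
        rw [coeff_appell]
        simp only [e00, e01]
        by_cases hki : k ≤ i0
        · rw [if_pos (by omega : d 0 + k + d 1 ≤ n), if_pos hki,
            show n - (d 0 + k) - d 1 = i0 - k by omega, qChoose]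
          have hfac : qFact q (d 0 + k)
              = qFact q (d 0) * ∏ t ∈ Finset.range k, qInt q (d 0 + t + 1) :=
            qFact_mul_prod q (d 0) k
          have hpow : (q:K) ^ (n - k) = q ^ (d 0 + d 1) * q ^ (i0 - k) := by
            rw [← pow_add]
            congr 1
            omega
          have hPi : (∏ t ∈ Finset.range k, qInt q (d 0 + t + 1)) ≠ 0 :=
            Finset.prod_ne_zero_iff.mpr fun t _ => hq _ (by omega)
          rw [hfac, hpow]
          field_simp [qFact_ne_zero q hq, hPi]
        · rw [if_neg (by omega : ¬ (d 0 + k + d 1 ≤ n)), if_neg hki]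
          ring
      rw [Finset.sum_congr rfl hstep, ← Finset.sum_filter,
        show Finset.filter (fun k => k ≤ i0) (Finset.Icc 1 n) = Finset.Icc 1 i0 by
          ext x
          simp only [Finset.mem_filter, Finset.mem_Icc]
          omega,
        ← Finset.mul_sum, MA_lemma q hq0 hq1 hq G hG0 hG1 hG αG hαG i0]
    have hβ : ∑ k ∈ Finset.Icc 1 n, (q ^ (n - k) / qFact q k * (qInt q k * βG (k - 1)) *
          (if (1 : Fin 2) ∈ d.support then
            coeff (d - Finsupp.single 1 1 + Finsupp.single 0 k) (appell q G n) *
              ∏ t ∈ Finset.range k, qInt q (d 0 + t + 1)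
           else 0))
        = if (1 : Fin 2) ∈ d.support then
            q ^ (d 0 + d 1 - 1) *
              (qFact q n / (qFact q i0 * qFact q (d 0) * qFact q (d 1)) *
                q ^ ((d 1 - 1) * (d 1 - 1 - 1) / 2) * qInt q (d 1)) * G i0
          else 0 := by
      by_cases hsup : (1 : Fin 2) ∈ d.support
      · rw [if_pos hsup]
        have hd1 : 1 ≤ d 1 := by
          rw [Finsupp.mem_support_iff] at hsup
          omega
        have hstep : ∀ k ∈ Finset.Icc 1 n, (q ^ (n - k) / qFact q k * (qInt q k * βG (k - 1)) *
              (if (1 : Fin 2) ∈ d.support then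
                coeff (d - Finsupp.single 1 1 + Finsupp.single 0 k) (appell q G n) *
                  ∏ t ∈ Finset.range k, qInt q (d 0 + t + 1)
               else 0))
            = if k ≤ i0 + 1 then q ^ (d 0 + d 1 - 1) *
                (qFact q n / (qFact q i0 * qFact q (d 0) * qFact q (d 1)) *
                  q ^ ((d 1 - 1) * (d 1 - 1 - 1) / 2) * qInt q (d 1)) *
                (q ^ (i0 + 1 - k) * βG (k-1) * qChoose q i0 (k-1) * G (i0 + 1 - k)) else 0 := by
          intro k hk
          simp only [Finset.mem_Icc] at hk
          rw [if_pos hsup, coeff_appell]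
          simp only [e10, e11]
          by_cases hki : k ≤ i0 + 1
          · rw [if_pos (by omega : d 0 + k + (d 1 - 1) ≤ n), if_pos hki,
              show n - (d 0 + k) - (d 1 - 1) = i0 + 1 - k by omega, qChoose,
              show i0 - (k-1) = i0 + 1 - k by omega]
            have hfac : qFact q (d 0 + k)
                = qFact q (d 0) * ∏ t ∈ Finset.range k, qInt q (d 0 + t + 1) :=
              qFact_mul_prod q (d 0) k
            have hfk : qFact q k = qFact q (k-1) * qInt q k :=
              qFact_sub_one q (by omega)
            have hpow : (q:K) ^ (n - k) = q ^ (d 0 + d 1 - 1) * q ^ (i0 + 1 - k) := by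
              rw [← pow_add]
              congr 1
              omega
            have hPi : (∏ t ∈ Finset.range k, qInt q (d 0 + t + 1)) ≠ 0 :=
              Finset.prod_ne_zero_iff.mpr fun t _ => hq _ (by omega)
            have hfd1 : qFact q (d 1) = qFact q (d 1 - 1) * qInt q (d 1) :=
              qFact_sub_one q hd1
            rw [hfac, hfk, hpow, hfd1]
            field_simp [qFact_ne_zero q hq, hq k (by omega), hq (d 1) (by omega), hPi]
          · rw [if_neg (by omega : ¬ (d 0 + k + (d 1 - 1) ≤ n)), if_neg hki]
            ring
        rw [Finset.sum_congr rfl hstep, ← Finset.sum_filter,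
          show Finset.filter (fun k => k ≤ i0 + 1) (Finset.Icc 1 n) = Finset.Icc 1 (i0 + 1) by
            ext x
            simp only [Finset.mem_filter, Finset.mem_Icc]
            omega,
          ← Finset.mul_sum, MB_Icc q hq0 hq1 hq G hG0 hG1 hG βG hβG0 hβG i0]
      · rw [if_neg hsup]
        refine Finset.sum_eq_zero fun k hk => ?_
        rw [if_neg hsup]
        ring
    rw [hAval, hα, hβ]
    have hqint : ∀ a : ℕ, qInt q a = (q ^ a - 1) / (q - 1) := by
      intro a
      rw [eq_div_iff (sub_ne_zero.mpr hq1), mul_comm]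
      exact qInt_mul_sub_one q a
    by_cases hii0 : i0 = 0
    · rw [hii0, hG0]
      split_ifs <;> ring
    · have hii1 : 1 ≤ i0 := by omega
      split_ifs with hsup
      · have hd1 : 1 ≤ d 1 := by
          rw [Finsupp.mem_support_iff] at hsup
          omega
        have hqn : qInt q n
            = qInt q (d 0) + q ^ (d 0) * (qInt q (d 1) + q ^ (d 1) * qInt q i0) := by
          have h1 := qInt_add q (d 0) (d 1 + i0)
          have h2 := qInt_add q (d 1) i0
          rw [show d 0 + (d 1 + i0) = n by omega] at h1
          rw [h1, h2]
        have rd0 := qInt_mul_sub_one q (d 0)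
        have rd1' : (q-1) * qInt q (d 1) = q ^ (d 1 - 1) * q - 1 := by
          rw [qInt_mul_sub_one q (d 1),
            show (q:K) ^ (d 1) = q ^ (d 1 - 1) * q by rw [← pow_succ]; congr 1; omega]
        have ri0' : (q-1) * qInt q i0 = q ^ (i0 - 1) * q - 1 := by
          rw [qInt_mul_sub_one q i0,
            show (q:K) ^ i0 = q ^ (i0 - 1) * q by rw [← pow_succ]; congr 1; omega]
        have p7 : (q:K) ^ (d 1 * (d 1 - 1) / 2)
            = q ^ ((d 1 - 1) * (d 1 - 1 - 1) / 2) * q ^ (d 1 - 1) := by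
          obtain ⟨e, he⟩ : ∃ e, d 1 = e + 1 := ⟨d 1 - 1, by omega⟩
          rw [he, ← pow_add]
          congr 1
          simp only [Nat.add_sub_cancel]
          exact tri_step e
        have p1 : (q:K) ^ (n-1) = q ^ (i0-1) * q ^ (d 0) * q ^ (d 1 - 1) * q ^ 1 := by
          rw [← pow_add, ← pow_add, ← pow_add]
          congr 1
          omega
        have p2 : (q:K) ^ n = q ^ (i0-1) * q ^ (d 0) * q ^ (d 1 - 1) * q ^ 1 * q ^ 1 := by
          rw [← pow_add, ← pow_add, ← pow_add, ← pow_add]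
          congr 1
          omega
        have p3 : (q:K) ^ (d 0 + d 1) = q ^ (d 0) * q ^ (d 1 - 1) * q ^ 1 := by
          rw [← pow_add, ← pow_add]
          congr 1
          omega
        have p4 : (q:K) ^ (d 0 + d 1 - 1) = q ^ (d 0) * q ^ (d 1 - 1) := by
          rw [← pow_add]
          congr 1
          omega
        have p5 : (q:K) ^ (d 1) = q ^ (d 1 - 1) * q ^ 1 := by
          rw [← pow_add]
          congr 1
          omega
        rw [hqn, p1, p2, p3, p4, p7, p5]
        apply mul_left_cancel₀ (sub_ne_zero.mpr hq1 : q - (1:K) ≠ 0)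
        linear_combination
          (qFact q n / (qFact q i0 * qFact q (d 0) * qFact q (d 1)) *
              q ^ ((d 1 - 1) * (d 1 - 1 - 1) / 2) * G i0 * q ^ (d 0) * q ^ (d 1 - 1) *
              (q ^ (i0 - 1) * q ^ (d 1 - 1) * q ^ 2 - 1)) * rd0
          + (qFact q n / (qFact q i0 * qFact q (d 0) * qFact q (d 1)) *
              q ^ ((d 1 - 1) * (d 1 - 1 - 1) / 2) * G i0 * q ^ (d 0) * q ^ (d 1 - 1) *
              (1 - q ^ (d 0)) * q ^ (d 1 - 1) * q) * ri0'
          + (qFact q n / (qFact q i0 * qFact q (d 0) * qFact q (d 1)) *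
              q ^ ((d 1 - 1) * (d 1 - 1 - 1) / 2) * G i0 * q ^ (d 0) * q ^ (d 1 - 1) *
              (1 - q ^ (d 0))) * rd1'
      · have hd10 : d 1 = 0 := by
          rwa [Finsupp.notMem_support_iff] at hsup
        rw [hd10]
        have hqn : qInt q n = qInt q (d 0) + q ^ (d 0) * qInt q i0 := by
          have h1 := qInt_add q (d 0) i0
          rw [show d 0 + i0 = n by omega] at h1
          rw [h1]
        have rd0 := qInt_mul_sub_one q (d 0)
        have ri0' : (q-1) * qInt q i0 = q ^ (i0 - 1) * q - 1 := by
          rw [qInt_mul_sub_one q i0,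
            show (q:K) ^ i0 = q ^ (i0 - 1) * q by rw [← pow_succ]; congr 1; omega]
        have p1 : (q:K) ^ (n-1) = q ^ (i0-1) * q ^ (d 0) := by
          rw [← pow_add]
          congr 1
          omega
        have p2 : (q:K) ^ n = q ^ (i0-1) * q ^ (d 0) * q ^ 1 := by
          rw [← pow_add, ← pow_add]
          congr 1
          omega
        rw [hqn, p1, p2]
        simp only [Nat.add_zero, Nat.zero_mul, Nat.mul_zero, Nat.zero_div, pow_zero,
          qFact_zero, mul_one]
        apply mul_left_cancel₀ (sub_ne_zero.mpr hq1 : q - (1:K) ≠ 0)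
        linear_combination
          (qFact q n / (qFact q i0 * qFact q (d 0)) * G i0 * q ^ (d 0) *
            (q ^ (i0 - 1) * q - 1)) * rd0
          + (qFact q n / (qFact q i0 * qFact q (d 0)) * G i0 * q ^ (d 0) *
            (1 - q ^ (d 0))) * ri0'
  · have hA0 : coeff d (appell q G n) = 0 := by
      rw [coeff_appell, if_neg hd]
    have hs1 : ∑ k ∈ Finset.Icc 1 n, (q ^ (n - k) / qFact q k * αG k *
          (coeff (d + Finsupp.single 0 k) (appell q G n) *
            ∏ t ∈ Finset.range k, qInt q (d 0 + t + 1))) = 0 := by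
      refine Finset.sum_eq_zero fun k hk => ?_
      rw [coeff_appell]
      simp only [e00, e01]
      rw [if_neg (by omega)]
      ring
    have hs2 : ∑ k ∈ Finset.Icc 1 n, (q ^ (n - k) / qFact q k * (qInt q k * βG (k - 1)) *
          (if (1 : Fin 2) ∈ d.support then
            coeff (d - Finsupp.single 1 1 + Finsupp.single 0 k) (appell q G n) *
              ∏ t ∈ Finset.range k, qInt q (d 0 + t + 1)
           else 0)) = 0 := by
      refine Finset.sum_eq_zero fun k hk => ?_
      simp only [Finset.mem_Icc] at hk
      by_cases hsup : (1 : Fin 2) ∈ d.support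
      · rw [if_pos hsup, coeff_appell]
        simp only [e10, e11]
        have hd1 : 1 ≤ d 1 := by
          rw [Finsupp.mem_support_iff] at hsup
          omega
        rw [if_neg (by omega)]
        ring
      · rw [if_neg hsup]
        ring
    rw [hA0, hs1, hs2]
    ring
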